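/- Let M_DG be a symmetric real n × n matrix, M_div a symmetric positive definite real m × m matrix, D a real n × m matrix, ε ∈ ℝ, s ∈ ℝⁿ, and G : ℝⁿ → ℝ differentiable. Let φ : ℝ → ℝⁿ be differentiable, define σ(t) = −M_div⁻¹ Dᵀ φ(t), and let j : ℝ → ℝᵐ, μ : ℝ → ℝⁿ and a family of symmetric positive semidefinite m × m matrices W(t) satisfy, for all t: (i) M_DG φ'(t) = s − D j(t); (ii) W(t) j(t) = Dᵀ μ(t); (iii) M_DG μ(t) = ∇G(φ(t)) − ε² D σ(t). Then the discrete energy H(t) = G(φ(t)) + (ε²/2) ⟨σ(t), M_div σ(t)⟩ is differentiable with H'(t) = ⟨μ(t), s⟩ − ⟨j(t), W(t) j(t)⟩ ≤ ⟨μ(t), s⟩ for all t; in particular, if s = 0 then H is nonincreasing. (Algebraic form of Proposition 1: the mixed DG semidiscretization of the Cahn–Hilliard equation dissipates the discrete energy H_DG, with rate −‖j_h/√(d(φ_h))‖², up to the forcing term.) -/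

import Mathlib

open Matrix

/-- **Energy dissipation for the mixed DG semidiscretization of Cahn–Hilliard
(Proposition 1, algebraic form).** Given (i) `M_DG φ' = s − D j`, (ii) `W j = Dᵀ μ`,
(iii) `M_DG μ = ∇G(φ) − ε² D σ` with `σ = −M_div⁻¹ Dᵀ φ`, `M_DG` symmetric,
`M_div` symmetric positive definite and `W(t)` positive semidefinite, the discrete
energy `H = G(φ) + (ε²/2)⟨σ, M_div σ⟩` satisfies
`H'(t) = ⟨μ, s⟩ − ⟨j, W j⟩ ≤ ⟨μ, s⟩`; if `s = 0` then `H` is nonincreasing. -/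
theorem stmt_9 (n m : ℕ)
    (MDG : Matrix (Fin n) (Fin n) ℝ) (hMDG : MDG.IsSymm)
    (Mdiv : Matrix (Fin m) (Fin m) ℝ) (hMdiv : Mdiv.PosDef)
    (D : Matrix (Fin n) (Fin m) ℝ) (ε : ℝ) (s : Fin n → ℝ)
    (G : (Fin n → ℝ) → ℝ) (hG : Differentiable ℝ G)
    (φ : ℝ → Fin n → ℝ) (hφ : Differentiable ℝ φ)
    (σ : ℝ → Fin m → ℝ) (hσ : ∀ t, σ t = -(Mdiv⁻¹ *ᵥ (Dᵀ *ᵥ φ t)))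
    (j : ℝ → Fin m → ℝ) (μ : ℝ → Fin n → ℝ)
    (W : ℝ → Matrix (Fin m) (Fin m) ℝ) (hW : ∀ t, (W t).PosSemidef)
    (h1 : ∀ t, MDG *ᵥ deriv φ t = s - D *ᵥ j t)
    (h2 : ∀ t, W t *ᵥ j t = Dᵀ *ᵥ μ t)
    (h3 : ∀ t, MDG *ᵥ μ t
      = (fun i => fderiv ℝ G (φ t) (Pi.single i 1)) - ε^2 • (D *ᵥ σ t)) :
    (∀ t : ℝ,
      HasDerivAt (fun τ => G (φ τ) + ε^2/2 * dotProduct (σ τ) (Mdiv *ᵥ σ τ))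
        (dotProduct (μ t) s - dotProduct (j t) (W t *ᵥ j t)) t
      ∧ dotProduct (μ t) s - dotProduct (j t) (W t *ᵥ j t) ≤ dotProduct (μ t) s)
    ∧ (s = 0 →
        Antitone (fun t => G (φ t) + ε^2/2 * dotProduct (σ t) (Mdiv *ᵥ σ t))) := by
  set A : Matrix (Fin m) (Fin n) ℝ := -(Mdiv⁻¹ * Dᵀ) with hA
  have hσA : ∀ τ, σ τ = A *ᵥ φ τ := by
    intro τ
    rw [hσ, hA, Matrix.neg_mulVec, Matrix.mulVec_mulVec]
  have hMinv : Mdiv * Mdiv⁻¹ = 1 :=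
    Matrix.mul_nonsing_inv _ (isUnit_iff_ne_zero.mpr (ne_of_gt hMdiv.det_pos))
  have hMA : ∀ x : Fin n → ℝ, Mdiv *ᵥ (A *ᵥ x) = -(Dᵀ *ᵥ x) := by
    intro x
    rw [Matrix.mulVec_mulVec, hA, Matrix.mul_neg, ← Matrix.mul_assoc, hMinv,
      Matrix.one_mul, Matrix.neg_mulVec]
  have hMinvSymm : (Mdiv⁻¹)ᵀ = Mdiv⁻¹ := by
    rw [Matrix.transpose_nonsing_inv]
    congr 1
    exact hMdiv.1.eq
  -- the main derivative computation
  have key : ∀ t, HasDerivAt (fun τ => G (φ τ) + ε^2/2 * dotProduct (σ τ) (Mdiv *ᵥ σ τ))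
      (dotProduct (μ t) s - dotProduct (j t) (W t *ᵥ j t)) t := by
    intro t
    set p := deriv φ t with hp
    have hφt : HasDerivAt φ p t := (hφ t).hasDerivAt
    have hφi : ∀ k, HasDerivAt (fun τ => φ τ k) (p k) t := hasDerivAt_pi.mp hφt
    have hσi : ∀ i, HasDerivAt (fun τ => σ τ i) ((A *ᵥ p) i) t := by
      intro i
      have he : (fun τ => σ τ i) = fun τ => ∑ k, A i k * φ τ k := by
        funext τ; rw [hσA]; rfl
      rw [he]
      simpa [Matrix.mulVec, dotProduct] using
        HasDerivAt.fun_sum (fun k (_ : k ∈ Finset.univ) => (hφi k).const_mul (A i k))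
    have hGd : HasDerivAt (fun τ => G (φ τ))
        (dotProduct (fun i => fderiv ℝ G (φ t) (Pi.single i 1)) p) t := by
      have h := ((hG (φ t)).hasFDerivAt).comp_hasDerivAt t hφt
      convert h using 1
      · rfl
      · rfl
      · rfl
      set L := fderiv ℝ G (φ t) with hL
      have hpexp : p = ∑ i, p i • (Pi.single i 1 : Fin n → ℝ) := by
        funext k
        simp [Finset.sum_apply, Pi.single_apply]
      have : L p = ∑ i, p i * L (Pi.single i 1) := by
        conv_lhs => rw [hpexp]
        rw [map_sum]
        simp [smul_eq_mul]
      simp [dotProduct, this, mul_comm]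
    have hq : HasDerivAt (fun τ => dotProduct (σ τ) (Mdiv *ᵥ σ τ))
        (dotProduct (A *ᵥ p) (Mdiv *ᵥ σ t) + dotProduct (σ t) (Mdiv *ᵥ (A *ᵥ p))) t := by
      have hfun : (fun τ => dotProduct (σ τ) (Mdiv *ᵥ σ τ))
          = fun τ => ∑ i, σ τ i * ∑ k, Mdiv i k * σ τ k := by
        funext τ; simp [dotProduct, Matrix.mulVec]
      rw [hfun]
      have hd := HasDerivAt.fun_sum (fun i (_ : i ∈ Finset.univ) =>
        (hσi i).mul (HasDerivAt.fun_sum (fun k (_ : k ∈ Finset.univ) =>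
          (hσi k).const_mul (Mdiv i k))))
      convert hd using 1
      · rfl
      · rfl
      · rfl
      simp [dotProduct, Matrix.mulVec, Finset.sum_add_distrib]
    have total := hGd.add (hq.const_mul (ε^2/2))
    convert total using 1
    · rfl
    · rfl
    · rfl
    -- algebra
    have hterm2 : dotProduct (σ t) (Mdiv *ᵥ (A *ᵥ p)) = -(dotProduct (D *ᵥ σ t) p) := by
      rw [hMA, dotProduct_neg, Matrix.dotProduct_mulVec, ← Matrix.mulVec_transpose,
        Matrix.transpose_transpose]
    have hterm1 : dotProduct (A *ᵥ p) (Mdiv *ᵥ σ t) = dotProduct (σ t) (Mdiv *ᵥ (A *ᵥ p)) := by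
      rw [hσA, hMA, hMA, dotProduct_neg, dotProduct_neg, neg_inj, hA,
        Matrix.neg_mulVec, Matrix.neg_mulVec, neg_dotProduct, neg_dotProduct, neg_inj,
        ← Matrix.mulVec_mulVec, ← Matrix.mulVec_mulVec]
      rw [dotProduct_comm, Matrix.dotProduct_mulVec (Dᵀ *ᵥ φ t), ← Matrix.mulVec_transpose,
        hMinvSymm]
    have hgrad : (fun i => fderiv ℝ G (φ t) (Pi.single i 1))
        = MDG *ᵥ μ t + ε^2 • (D *ᵥ σ t) := by
      rw [h3]; abel
    rw [hterm1, hterm2, hgrad]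
    have hμ : dotProduct (MDG *ᵥ μ t) p = dotProduct (μ t) (MDG *ᵥ p) := by
      rw [dotProduct_comm, Matrix.dotProduct_mulVec, ← Matrix.mulVec_transpose, hMDG.eq,
        dotProduct_comm]
    have hWj : dotProduct (μ t) (D *ᵥ j t) = dotProduct (j t) (W t *ᵥ j t) := by
      rw [Matrix.dotProduct_mulVec, ← Matrix.mulVec_transpose, ← h2, dotProduct_comm]
    rw [add_dotProduct, hμ, hp, h1, dotProduct_sub, hWj, smul_dotProduct]
    simp only [smul_eq_mul]
    ring
  refine ⟨fun t => ⟨key t, ?_⟩, fun hs => ?_⟩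
  · have hnn : 0 ≤ dotProduct (j t) (W t *ᵥ j t) := by
      simpa using (hW t).dotProduct_mulVec_nonneg (j t)
    linarith
  · subst hs
    apply antitone_of_deriv_nonpos
    · exact fun t => ((key t).differentiableAt)
    · intro t
      rw [(key t).deriv]
      have hnn : 0 ≤ dotProduct (j t) (W t *ᵥ j t) := by
        simpa using (hW t).dotProduct_mulVec_nonneg (j t)
      simp only [dotProduct_zero, zero_sub]
      linarith
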